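/- Let A be a commutative ring, J an ideal, and E a Z/2-graded A-module with filtration E_(p) = J^p • E₀ + J^(p-1) • E₁. Let D : E → E be a quasi-derivation over a derivation Γ of A such that D(E_(r)) ⊆ E_(r+p) and Γ(J^s) ⊆ J^(s+q) for all r, s, with p, q ≥ 2. If J^(m+1) = 0, then D is nilpotent: D^N = 0 for N large enough (e.g. N > (m+2)/2). -/
import Mathlib


/-- A quasi-derivation `D` over `Γ` raising the filtration
`E_(r) = J^r • E₀ + J^(r-1) • E₁` by `p ≥ 2` (with `Γ(J^s) ⊆ J^(s+q)`, `q ≥ 2`)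
is nilpotent when `J^(m+1) = 0`: `D^N = 0` as soon as `m + 2 ≤ 2N`. -/
theorem filtered_quasiDerivation_nilpotent {A : Type*} [CommRing A]
    (J : Ideal A) (m : ℕ) (hJ : J ^ (m + 1) = ⊥)
    {E : Type*} [AddCommGroup E] [Module A E]
    (E0 E1 : Submodule A E) (hgrading : E0 ⊔ E1 = ⊤)
    (F : ℕ → Submodule A E)
    (hF0 : F 0 = ⊤)
    (hF : ∀ r : ℕ, F (r + 1) = J ^ (r + 1) • E0 ⊔ J ^ r • E1)
    (p q : ℕ) (hp : 2 ≤ p) (hq : 2 ≤ q)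
    (Γ : A → A) (D : E → E)
    (hΓadd : ∀ a b : A, Γ (a + b) = Γ a + Γ b)
    (hΓmul : ∀ a b : A, Γ (a * b) = Γ a * b + a * Γ b)
    (hDadd : ∀ u v : E, D (u + v) = D u + D v)
    (hD : ∀ (f : A) (v : E), D (f • v) = Γ f • v + f • D v)
    (hDF : ∀ r : ℕ, ∀ v ∈ F r, D v ∈ F (r + p))
    (hΓJ : ∀ s : ℕ, ∀ a ∈ J ^ s, Γ a ∈ J ^ (s + q)) :
    ∀ N : ℕ, m + 2 ≤ 2 * N → ∀ v : E, D^[N] v = 0 := by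
  intro N hN v
  -- D^[k] v lies in F (k * p)
  have key : ∀ k : ℕ, D^[k] v ∈ F (k * p) := by
    intro k
    induction k with
    | zero => simp [hF0]
    | succ k ih =>
        have : D (D^[k] v) ∈ F (k * p + p) := hDF _ _ ih
        rw [Function.iterate_succ_apply']
        simpa [Nat.succ_mul] using this
  -- F r = ⊥ for r ≥ m + 2
  have hFbot : ∀ r : ℕ, m + 2 ≤ r → F r = ⊥ := by
    intro r hr
    obtain ⟨s, rfl⟩ : ∃ s, r = s + 1 := ⟨r - 1, by omega⟩
    have hs : m + 1 ≤ s := by omega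
    have h1 : J ^ (s + 1) = ⊥ :=
      le_bot_iff.mp (hJ ▸ Ideal.pow_le_pow_right (by omega))
    have h2 : J ^ s = ⊥ := le_bot_iff.mp (hJ ▸ Ideal.pow_le_pow_right hs)
    rw [hF, h1, h2]
    simp
  have hNp : m + 2 ≤ N * p := by
    calc m + 2 ≤ 2 * N := hN
    _ ≤ N * p := by nlinarith
  have := key N
  rw [hFbot _ hNp] at this
  simpa using this
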